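/- Structure of HTOs in terms of Kraus operators (Theorem 4(a), finite-dimensional bath): consider a realization setup (A, B, H_B, b, U) with heat transfer operator Q. Let n ≥ 1 and M : Fin n → Matrix A A ℂ be a linearly independent family with ∑ i, M iᴴ * M i = 1, and suppose that for every density matrix ρ on A, tr_B (U * (ρ ⊗ₖ ρ_B) * Uᴴ) = ∑ i, M i * ρ * (M i)ᴴ. Then there exists a Hermitian matrix q : Matrix (Fin n) (Fin n) ℂ such that Q = ∑ i, ∑ j, q i j • ((M i)ᴴ * M j). -/

import Mathlib

open Matrix Kronecker
open scoped ComplexOrder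

noncomputable section

/-- A density matrix: positive semidefinite with trace 1. -/
def IsDensityMatrix {ι : Type*} [Fintype ι] (ρ : Matrix ι ι ℂ) : Prop :=
  ρ.PosSemidef ∧ ρ.trace = 1

/-- The matrix exponential. -/
noncomputable def mexp {ι : Type*} [Fintype ι] [DecidableEq ι] (M : Matrix ι ι ℂ) :
    Matrix ι ι ℂ :=
  NormedSpace.exp M

/-- Von Neumann entropy of a (Hermitian) matrix, via its eigenvalues. -/
noncomputable def vnEntropy {ι : Type*} [Fintype ι] [DecidableEq ι] (ρ : Matrix ι ι ℂ) : ℝ :=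
  if h : ρ.IsHermitian then -∑ i, h.eigenvalues i * Real.log (h.eigenvalues i) else 0

/-- The Gibbs state of the Hamiltonian `H` at inverse temperature `b`. -/
noncomputable def gibbs {ι : Type*} [Fintype ι] [DecidableEq ι] (H : Matrix ι ι ℂ) (b : ℝ) :
    Matrix ι ι ℂ :=
  (Matrix.trace (mexp (-b • H)))⁻¹ • mexp (-b • H)

/-- Equilibrium energy of the bath. -/
noncomputable def eqEnergy {ι : Type*} [Fintype ι] [DecidableEq ι] (H : Matrix ι ι ℂ) (b : ℝ) : ℝ :=
  (Matrix.trace (gibbs H b * H)).re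

/-- Partial trace over the second (bath) factor. -/
def ptraceB {A B : Type*} [Fintype B] (M : Matrix (A × B) (A × B) ℂ) : Matrix A A ℂ :=
  Matrix.of fun a a' => ∑ k : B, M (a, k) (a', k)

/-- Partial trace over the first (device) factor. -/
def ptraceA {A B : Type*} [Fintype A] (M : Matrix (A × B) (A × B) ℂ) : Matrix B B ℂ :=
  Matrix.of fun k k' => ∑ a : A, M (a, k) (a, k')

/-- The heat transfer operator of a realization setup. -/
noncomputable def hto {A B : Type*} [Fintype A] [DecidableEq A] [Fintype B] [DecidableEq B]
    (H_B : Matrix B B ℂ) (b : ℝ) (U : Matrix (A × B) (A × B) ℂ) : Matrix A A ℂ :=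
  ptraceB (((1 : Matrix A A ℂ) ⊗ₖ gibbs H_B b) * Uᴴ * ((1 : Matrix A A ℂ) ⊗ₖ H_B) * U)
    - eqEnergy H_B b • (1 : Matrix A A ℂ)

/-- Matrix logarithm of a Hermitian matrix through the continuous functional calculus. -/
noncomputable def mlog {ι : Type*} [Fintype ι] [DecidableEq ι] (ρ : Matrix ι ι ℂ) :
    Matrix ι ι ℂ :=
  if h : ρ.IsHermitian then h.cfc Real.log else 0

/-- Quantum relative entropy `S(σ‖ρ)`. -/
noncomputable def relEntropy {ι : Type*} [Fintype ι] [DecidableEq ι] (σ ρ : Matrix ι ι ℂ) : ℝ :=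
  (Matrix.trace (σ * (mlog σ - mlog ρ))).re

end

section AuxHTO
set_option linter.unusedSectionVars false

open Complex

variable {A B : Type*} [Fintype A] [DecidableEq A] [Fintype B] [DecidableEq B]

private lemma kron_one_conjT (S : Matrix B B ℂ) :
    ((1 : Matrix A A ℂ) ⊗ₖ S)ᴴ = (1 : Matrix A A ℂ) ⊗ₖ Sᴴ := by
  ext ⟨a, k⟩ ⟨a', k'⟩
  simp [Matrix.conjTranspose_apply, Matrix.one_apply, star_mul',
    apply_ite (star : ℂ → ℂ), eq_comm]

private lemma ptraceB_kron_comm (S : Matrix B B ℂ) (X : Matrix (A × B) (A × B) ℂ) :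
    ptraceB (((1 : Matrix A A ℂ) ⊗ₖ S) * X) = ptraceB (X * ((1 : Matrix A A ℂ) ⊗ₖ S)) := by
  ext a a'
  show ∑ k, (((1 : Matrix A A ℂ) ⊗ₖ S) * X) (a, k) (a', k)
      = ∑ k, (X * ((1 : Matrix A A ℂ) ⊗ₖ S)) (a, k) (a', k)
  have hL : ∀ k, (((1 : Matrix A A ℂ) ⊗ₖ S) * X) (a, k) (a', k)
      = ∑ m, S k m * X (a, m) (a', k) := by
    intro k
    rw [Matrix.mul_apply, Fintype.sum_prod_type, Finset.sum_comm]
    refine Finset.sum_congr rfl fun m _ => ?_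
    simp [Matrix.one_apply, ite_mul]
  have hR : ∀ k, (X * ((1 : Matrix A A ℂ) ⊗ₖ S)) (a, k) (a', k)
      = ∑ m, X (a, k) (a', m) * S m k := by
    intro k
    rw [Matrix.mul_apply, Fintype.sum_prod_type, Finset.sum_comm]
    refine Finset.sum_congr rfl fun m _ => ?_
    simp [Matrix.one_apply, mul_ite, ite_mul, mul_zero, zero_mul]
  simp only [hL, hR]
  rw [Finset.sum_comm]
  exact Finset.sum_congr rfl fun m _ => Finset.sum_congr rfl fun k _ => mul_comm _ _

/-- The Kraus operators obtained from the unitary `U`, eigenbasis `W` of the bath, and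
eigenvalue weights `p` of the bath state. -/
private noncomputable def krausOp (U : Matrix (A × B) (A × B) ℂ) (W : Matrix B B ℂ)
    (p : B → ℝ) (α : B × B) : Matrix A A ℂ :=
  Matrix.of fun a c => (Real.sqrt (p α.2) : ℂ) *
    ((((1 : Matrix A A ℂ) ⊗ₖ Wᴴ) * U * ((1 : Matrix A A ℂ) ⊗ₖ W)) (a, α.1) (c, α.2))

private lemma one_kron_WW (W : Matrix B B ℂ) (hW : W ∈ Matrix.unitaryGroup B ℂ) :
    ((1 : Matrix A A ℂ) ⊗ₖ W) * ((1 : Matrix A A ℂ) ⊗ₖ Wᴴ) = 1 := by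
  rw [← Matrix.mul_kronecker_mul, Matrix.mul_one, ← Matrix.star_eq_conjTranspose,
    Matrix.mem_unitaryGroup_iff.mp hW, Matrix.one_kronecker_one]

private lemma one_kron_W'W (W : Matrix B B ℂ) (hW : W ∈ Matrix.unitaryGroup B ℂ) :
    ((1 : Matrix A A ℂ) ⊗ₖ Wᴴ) * ((1 : Matrix A A ℂ) ⊗ₖ W) = 1 := by
  rw [← Matrix.mul_kronecker_mul, Matrix.mul_one, ← Matrix.star_eq_conjTranspose,
    Matrix.mem_unitaryGroup_iff'.mp hW, Matrix.one_kronecker_one]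

private lemma kron_conj_sandwich (W : Matrix B B ℂ) (S : Matrix B B ℂ) :
    (1 : Matrix A A ℂ) ⊗ₖ (W * S * Wᴴ)
      = ((1 : Matrix A A ℂ) ⊗ₖ W) * (((1 : Matrix A A ℂ) ⊗ₖ S) * ((1 : Matrix A A ℂ) ⊗ₖ Wᴴ)) := by
  rw [← Matrix.mul_kronecker_mul, ← Matrix.mul_kronecker_mul, Matrix.one_mul, Matrix.one_mul,
    Matrix.mul_assoc]

private lemma kron_conj_sandwich' (W : Matrix B B ℂ) (ρ : Matrix A A ℂ) (S : Matrix B B ℂ) :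
    ρ ⊗ₖ (W * S * Wᴴ)
      = ((1 : Matrix A A ℂ) ⊗ₖ W) * ((ρ ⊗ₖ S) * ((1 : Matrix A A ℂ) ⊗ₖ Wᴴ)) := by
  rw [← Matrix.mul_kronecker_mul, ← Matrix.mul_kronecker_mul, Matrix.one_mul, Matrix.mul_one,
    Matrix.mul_assoc]

private lemma kraus_rep (U : Matrix (A × B) (A × B) ℂ) (W : Matrix B B ℂ)
    (hW : W ∈ Matrix.unitaryGroup B ℂ) (p : B → ℝ) (hp : ∀ l, 0 ≤ p l) (ρ : Matrix A A ℂ) :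
    ptraceB (U * (ρ ⊗ₖ (W * Matrix.diagonal (fun l => (p l : ℂ)) * Wᴴ)) * Uᴴ)
      = ∑ α : B × B, krausOp U W p α * ρ * (krausOp U W p α)ᴴ := by
  have hWW := one_kron_WW (A := A) W hW
  have hW'W := one_kron_W'W (A := A) W hW
  set D : Matrix B B ℂ := Matrix.diagonal (fun l => (p l : ℂ)) with hD
  set Ut : Matrix (A × B) (A × B) ℂ :=
    ((1 : Matrix A A ℂ) ⊗ₖ Wᴴ) * U * ((1 : Matrix A A ℂ) ⊗ₖ W) with hUt
  have hc1 : ∀ X : Matrix (A × B) (A × B) ℂ,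
      ((1 : Matrix A A ℂ) ⊗ₖ W) * (((1 : Matrix A A ℂ) ⊗ₖ Wᴴ) * X) = X := fun X => by
    rw [← Matrix.mul_assoc, hWW, Matrix.one_mul]
  have hc2 : ∀ X : Matrix (A × B) (A × B) ℂ,
      ((1 : Matrix A A ℂ) ⊗ₖ Wᴴ) * (((1 : Matrix A A ℂ) ⊗ₖ W) * X) = X := fun X => by
    rw [← Matrix.mul_assoc, hW'W, Matrix.one_mul]
  have key : U * (ρ ⊗ₖ (W * D * Wᴴ)) * Uᴴ
      = ((1 : Matrix A A ℂ) ⊗ₖ W) * ((Ut * (ρ ⊗ₖ D) * Utᴴ) * ((1 : Matrix A A ℂ) ⊗ₖ Wᴴ)) := by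
    rw [kron_conj_sandwich' W ρ D]
    simp only [hUt, Matrix.conjTranspose_mul, kron_one_conjT, Matrix.conjTranspose_conjTranspose,
      Matrix.mul_assoc, hc1, hc2, hWW, Matrix.mul_one]
  rw [key, ptraceB_kron_comm, Matrix.mul_assoc, hW'W, Matrix.mul_one]
  -- entrywise computation
  ext a a'
  have hmid : ∀ (x : A × B) (c' : A) (l' : B), (Ut * (ρ ⊗ₖ D)) x (c', l')
      = ∑ c, Ut x (c, l') * ρ c c' * (p l' : ℂ) := by
    intro x c' l'
    rw [Matrix.mul_apply, Fintype.sum_prod_type]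
    simp only [Matrix.kroneckerMap_apply, hD, Matrix.diagonal_apply, mul_ite, mul_zero,
      Finset.sum_ite_eq', Finset.mem_univ, if_true]
    exact Finset.sum_congr rfl fun c _ => by ring
  have hKer : ∀ k, (Ut * (ρ ⊗ₖ D) * Utᴴ) (a, k) (a', k)
      = ∑ l', ∑ c', ∑ c, Ut (a, k) (c, l') * ρ c c' * (p l' : ℂ) * star (Ut (a', k) (c', l')) := by
    intro k
    rw [Matrix.mul_apply, Fintype.sum_prod_type, Finset.sum_comm]
    refine Finset.sum_congr rfl fun l' _ => Finset.sum_congr rfl fun c' _ => ?_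
    rw [hmid, Matrix.conjTranspose_apply, Finset.sum_mul]
  have hRHS : ∀ α : B × B, (krausOp U W p α * ρ * (krausOp U W p α)ᴴ) a a'
      = ∑ c', ∑ c, ((Real.sqrt (p α.2) : ℂ) * Ut (a, α.1) (c, α.2)) * ρ c c' *
          star ((Real.sqrt (p α.2) : ℂ) * Ut (a', α.1) (c', α.2)) := by
    intro α
    rw [Matrix.mul_apply]
    refine Finset.sum_congr rfl fun c' _ => ?_
    rw [Matrix.conjTranspose_apply, Matrix.mul_apply, Finset.sum_mul]
    refine Finset.sum_congr rfl fun c _ => ?_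
    simp only [krausOp, Matrix.of_apply, hUt]
  rw [Fintype.sum_prod_type]
  simp only [Matrix.sum_apply]
  simp only [ptraceB, Matrix.of_apply]
  simp only [hKer, hRHS]
  refine Finset.sum_congr rfl fun k _ => Finset.sum_congr rfl fun l _ =>
    Finset.sum_congr rfl fun c' _ => Finset.sum_congr rfl fun c _ => ?_
  have hsq : (Real.sqrt (p l) : ℂ) * (Real.sqrt (p l) : ℂ) = (p l : ℂ) := by
    rw [← Complex.ofReal_mul, Real.mul_self_sqrt (hp l)]
  simp only [star_mul', RCLike.star_def, Complex.conj_ofReal]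
  rw [← hsq]
  ring

private lemma hto_rep (U : Matrix (A × B) (A × B) ℂ) (W : Matrix B B ℂ)
    (hW : W ∈ Matrix.unitaryGroup B ℂ) (p e : B → ℝ) (hp : ∀ l, 0 ≤ p l) :
    ptraceB (((1 : Matrix A A ℂ) ⊗ₖ (W * Matrix.diagonal (fun l => (p l : ℂ)) * Wᴴ)) * Uᴴ *
        ((1 : Matrix A A ℂ) ⊗ₖ (W * Matrix.diagonal (fun l => (e l : ℂ)) * Wᴴ)) * U)
      = ∑ α : B × B, ((e α.1 : ℂ)) • ((krausOp U W p α)ᴴ * krausOp U W p α) := by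
  have hWW := one_kron_WW (A := A) W hW
  have hW'W := one_kron_W'W (A := A) W hW
  set Dp : Matrix B B ℂ := Matrix.diagonal (fun l => (p l : ℂ)) with hDp
  set De : Matrix B B ℂ := Matrix.diagonal (fun l => (e l : ℂ)) with hDe
  set Ut : Matrix (A × B) (A × B) ℂ :=
    ((1 : Matrix A A ℂ) ⊗ₖ Wᴴ) * U * ((1 : Matrix A A ℂ) ⊗ₖ W) with hUt
  have hc1 : ∀ X : Matrix (A × B) (A × B) ℂ,
      ((1 : Matrix A A ℂ) ⊗ₖ W) * (((1 : Matrix A A ℂ) ⊗ₖ Wᴴ) * X) = X := fun X => by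
    rw [← Matrix.mul_assoc, hWW, Matrix.one_mul]
  have hc2 : ∀ X : Matrix (A × B) (A × B) ℂ,
      ((1 : Matrix A A ℂ) ⊗ₖ Wᴴ) * (((1 : Matrix A A ℂ) ⊗ₖ W) * X) = X := fun X => by
    rw [← Matrix.mul_assoc, hW'W, Matrix.one_mul]
  have key : ((1 : Matrix A A ℂ) ⊗ₖ (W * Dp * Wᴴ)) * Uᴴ *
        ((1 : Matrix A A ℂ) ⊗ₖ (W * De * Wᴴ)) * U
      = ((1 : Matrix A A ℂ) ⊗ₖ W) *
          ((((1 : Matrix A A ℂ) ⊗ₖ Dp) * (Utᴴ * (((1 : Matrix A A ℂ) ⊗ₖ De) * Ut))) *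
            ((1 : Matrix A A ℂ) ⊗ₖ Wᴴ)) := by
    rw [kron_conj_sandwich W Dp, kron_conj_sandwich W De]
    simp only [hUt, Matrix.conjTranspose_mul, kron_one_conjT, Matrix.conjTranspose_conjTranspose,
      Matrix.mul_assoc, hc1, hc2, hWW, Matrix.mul_one]
  rw [key, ptraceB_kron_comm, Matrix.mul_assoc, hW'W, Matrix.mul_one]
  ext a a'
  have h3 : ∀ (x : A × B) (c : A) (l : B), (((1 : Matrix A A ℂ) ⊗ₖ De) * Ut) (c, l) x
      = (e l : ℂ) * Ut (c, l) x := by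
    intro x c l
    rw [Matrix.mul_apply, Fintype.sum_prod_type]
    simp [Matrix.one_apply, hDe, Matrix.diagonal_apply, mul_ite, ite_mul, mul_zero, zero_mul]
  have h4 : ∀ k, (Utᴴ * (((1 : Matrix A A ℂ) ⊗ₖ De) * Ut)) (a, k) (a', k)
      = ∑ c, ∑ l, star (Ut (c, l) (a, k)) * ((e l : ℂ) * Ut (c, l) (a', k)) := by
    intro k
    rw [Matrix.mul_apply, Fintype.sum_prod_type]
    exact Finset.sum_congr rfl fun c _ => Finset.sum_congr rfl fun l _ => by
      rw [Matrix.conjTranspose_apply, h3]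
  have h5 : ∀ (Y : Matrix (A × B) (A × B) ℂ) (k : B) (y : A × B),
      (((1 : Matrix A A ℂ) ⊗ₖ Dp) * Y) (a, k) y = (p k : ℂ) * Y (a, k) y := by
    intro Y k y
    rw [Matrix.mul_apply, Fintype.sum_prod_type]
    simp [Matrix.one_apply, hDp, Matrix.diagonal_apply, mul_ite, ite_mul, mul_zero, zero_mul]
  have hRHS : ∀ α : B × B, ((krausOp U W p α)ᴴ * krausOp U W p α) a a'
      = ∑ c, star ((Real.sqrt (p α.2) : ℂ) * Ut (c, α.1) (a, α.2)) *
          ((Real.sqrt (p α.2) : ℂ) * Ut (c, α.1) (a', α.2)) := by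
    intro α
    rw [Matrix.mul_apply]
    exact Finset.sum_congr rfl fun c _ => by
      rw [Matrix.conjTranspose_apply]
      simp only [krausOp, Matrix.of_apply, hUt]
  rw [Fintype.sum_prod_type]
  simp only [Matrix.sum_apply, Matrix.smul_apply, smul_eq_mul]
  simp only [ptraceB, Matrix.of_apply]
  simp only [h5, h4, hRHS]
  simp only [Finset.mul_sum]
  have reorder : ∀ (f : B → A → B → ℂ), (∑ k, ∑ c, ∑ l, f k c l) = ∑ l, ∑ k, ∑ c, f k c l := by
    intro f
    calc (∑ k, ∑ c, ∑ l, f k c l) = ∑ k, ∑ l, ∑ c, f k c l :=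
          Finset.sum_congr rfl fun k _ => Finset.sum_comm
      _ = ∑ l, ∑ k, ∑ c, f k c l := Finset.sum_comm
  rw [reorder]
  refine Finset.sum_congr rfl fun l _ => Finset.sum_congr rfl fun k _ =>
    Finset.sum_congr rfl fun c _ => ?_
  have hsq : (Real.sqrt (p k) : ℂ) * (Real.sqrt (p k) : ℂ) = (p k : ℂ) := by
    rw [← Complex.ofReal_mul, Real.mul_self_sqrt (hp k)]
  simp only [star_mul', RCLike.star_def, Complex.conj_ofReal]
  rw [← hsq]
  ring

private lemma smul_diagonal' (r : ℂ) (d : B → ℂ) :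
    r • Matrix.diagonal d = Matrix.diagonal fun l => r * d l := by
  ext i j
  simp only [Matrix.diagonal_apply, Matrix.smul_apply, smul_eq_mul]
  split <;> simp

private lemma gibbs_spectral [Nonempty B] (H : Matrix B B ℂ) (hH : H.IsHermitian) (b : ℝ) :
    gibbs H b = (hH.eigenvectorUnitary : Matrix B B ℂ) *
      Matrix.diagonal (fun l =>
        ((Real.exp (-(b * hH.eigenvalues l)) / ∑ m, Real.exp (-(b * hH.eigenvalues m)) : ℝ) : ℂ)) *
      (hH.eigenvectorUnitary : Matrix B B ℂ)ᴴ := by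
  set W : Matrix B B ℂ := (hH.eigenvectorUnitary : Matrix B B ℂ) with hWdef
  have hW : W ∈ Matrix.unitaryGroup B ℂ := hH.eigenvectorUnitary.2
  set ε : B → ℝ := hH.eigenvalues with hε
  have hsm : (-b) • H = W * Matrix.diagonal (fun l => ((-(b * ε l) : ℝ) : ℂ)) * star W := by
    have heq : Matrix.diagonal (fun l => ((-(b * ε l) : ℝ) : ℂ))
        = (-b : ℝ) • Matrix.diagonal (RCLike.ofReal ∘ hH.eigenvalues) := by
      ext i j
      simp only [Matrix.diagonal_apply, Matrix.smul_apply, Function.comp_apply]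
      split
      · show ((-(b * ε i) : ℝ) : ℂ) = (-b : ℝ) • (Complex.ofReal (hH.eigenvalues i))
        simp only [Complex.real_smul, hε]
        push_cast
        ring
      · simp
    conv_lhs => rw [hH.spectral_theorem]
    rw [heq, mul_smul_comm, smul_mul_assoc]
    rfl
  have hWu : IsUnit W := ⟨⟨W, star W, Matrix.mem_unitaryGroup_iff.mp hW,
    Matrix.mem_unitaryGroup_iff'.mp hW⟩, rfl⟩
  have hWinv : W⁻¹ = star W := Matrix.inv_eq_right_inv (Matrix.mem_unitaryGroup_iff.mp hW)
  have hexp : mexp ((-b) • H) = W * Matrix.diagonal (fun l => ((Real.exp (-(b * ε l)) : ℝ) : ℂ))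
      * star W := by
    have hfun : NormedSpace.exp (fun l => ((-(b * ε l) : ℝ) : ℂ))
        = fun l => ((Real.exp (-(b * ε l)) : ℝ) : ℂ) := by
      funext l
      rw [Pi.coe_exp, ← Complex.exp_eq_exp_ℂ, ← Complex.ofReal_exp]
    rw [mexp, hsm, ← hWinv, Matrix.exp_conj W _ hWu, Matrix.exp_diagonal, hWinv, hfun]
  have htr : Matrix.trace (W * Matrix.diagonal (fun l => ((Real.exp (-(b * ε l)) : ℝ) : ℂ))
      * star W) = ((∑ m, Real.exp (-(b * ε m)) : ℝ) : ℂ) := by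
    rw [Matrix.trace_mul_cycle, Matrix.mem_unitaryGroup_iff'.mp hW, Matrix.one_mul,
      Matrix.trace_diagonal]
    push_cast
    rfl
  have hbH : -b • H = (-b) • H := by rw [neg_smul]
  have hdiag : ((((∑ m, Real.exp (-(b * ε m)) : ℝ)) : ℂ))⁻¹ •
        Matrix.diagonal (fun l => ((Real.exp (-(b * ε l)) : ℝ) : ℂ))
      = Matrix.diagonal
          (fun l => ((Real.exp (-(b * ε l)) / ∑ m, Real.exp (-(b * ε m)) : ℝ) : ℂ)) := by
    rw [smul_diagonal']
    ext l j
    simp only [Matrix.diagonal_apply]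
    split
    · rw [Complex.ofReal_div, div_eq_inv_mul]
    · rfl
  rw [gibbs, hbH, hexp, htr, ← smul_mul_assoc, ← mul_smul_comm, Matrix.star_eq_conjTranspose,
    hdiag]

/-- The completely positive map associated with a family of Kraus operators, as a linear map. -/
private noncomputable def krausMap {ι : Type*} [Fintype ι] (N : ι → Matrix A A ℂ) :
    Matrix A A ℂ →ₗ[ℂ] Matrix A A ℂ :=
  ∑ α, (LinearMap.mulRight ℂ (N α)ᴴ) ∘ₗ (LinearMap.mulLeft ℂ (N α))

private lemma krausMap_apply {ι : Type*} [Fintype ι] (N : ι → Matrix A A ℂ)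
    (ρ : Matrix A A ℂ) : krausMap N ρ = ∑ α, N α * ρ * (N α)ᴴ := by
  simp [krausMap, LinearMap.sum_apply, LinearMap.mulRight_apply, LinearMap.mulLeft_apply,
    Matrix.mul_assoc]

private lemma isDensity_outer (w : A → ℂ) (hw : ∑ a, Complex.normSq (w a) = 1) :
    IsDensityMatrix (Matrix.vecMulVec w (star w)) := by
  constructor
  · have h1 : Matrix.vecMulVec w (star w) = Matrix.replicateCol Unit w * (Matrix.replicateCol Unit w)ᴴ := by
      rw [Matrix.vecMulVec_eq Unit, Matrix.conjTranspose_replicateCol]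
    rw [h1]
    exact Matrix.posSemidef_self_mul_conjTranspose _
  · have h2 : Matrix.trace (Matrix.vecMulVec w (star w))
        = ((∑ a, Complex.normSq (w a) : ℝ) : ℂ) := by
      push_cast
      simp [Matrix.trace, Matrix.diag, Matrix.vecMulVec_apply, Complex.mul_conj]
    rw [h2, hw, Complex.ofReal_one]

private lemma krausMap_eq_on_all {ι κ : Type*} [Fintype ι] [Fintype κ]
    (Mf : ι → Matrix A A ℂ) (Kf : κ → Matrix A A ℂ)
    (h : ∀ ρ, IsDensityMatrix ρ → krausMap Mf ρ = krausMap Kf ρ) (X : Matrix A A ℂ) :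
    krausMap Mf X = krausMap Kf X := by
  -- Step 1: equality on all outer products `u ⬝ (star u)ᵀ`.
  have houter : ∀ u : A → ℂ, krausMap Mf (Matrix.vecMulVec u (star u))
      = krausMap Kf (Matrix.vecMulVec u (star u)) := by
    intro u
    by_cases hu : u = 0
    · have : Matrix.vecMulVec u (star u) = 0 := by
        ext a b'
        simp [Matrix.vecMulVec_apply, hu]
      rw [this, _root_.map_zero, _root_.map_zero]
    · set cR : ℝ := ∑ a, Complex.normSq (u a) with hcR
      have hc : 0 < cR := by
        obtain ⟨a0, ha0⟩ := Function.ne_iff.mp hu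
        exact Finset.sum_pos' (fun a _ => Complex.normSq_nonneg _)
          ⟨a0, Finset.mem_univ _, Complex.normSq_pos.mpr ha0⟩
      set w : A → ℂ := fun a => ((Real.sqrt cR : ℝ) : ℂ)⁻¹ * u a with hwdef
      have hs : ((Real.sqrt cR : ℝ) : ℂ) ≠ 0 := by
        exact_mod_cast Complex.ofReal_ne_zero.mpr (Real.sqrt_ne_zero'.mpr hc)
      have hsqC : ((Real.sqrt cR : ℝ) : ℂ) * ((Real.sqrt cR : ℝ) : ℂ) = (cR : ℂ) := by
        rw [← Complex.ofReal_mul, Real.mul_self_sqrt hc.le]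
      have hw1 : ∑ a, Complex.normSq (w a) = 1 := by
        have : ∀ a, Complex.normSq (w a) = cR⁻¹ * Complex.normSq (u a) := by
          intro a
          simp only [hwdef, Complex.normSq_mul, Complex.normSq_inv, Complex.normSq_ofReal,
            Real.mul_self_sqrt hc.le]
        rw [Finset.sum_congr rfl fun a _ => this a, ← Finset.mul_sum, ← hcR,
          inv_mul_cancel₀ hc.ne']
      have hscale : Matrix.vecMulVec u (star u)
          = (cR : ℂ) • Matrix.vecMulVec w (star w) := by
        ext a b'
        simp only [Matrix.vecMulVec_apply, Matrix.smul_apply, Pi.star_apply, hwdef,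
          smul_eq_mul, RCLike.star_def, _root_.map_mul, _root_.map_inv₀, Complex.conj_ofReal]
        field_simp
        linear_combination (u a * (starRingEnd ℂ) (u b')) * hsqC
      have hdens := isDensity_outer w hw1
      rw [hscale, _root_.map_smul, _root_.map_smul, h _ hdens]
  -- Step 2: polarization gives all `vecMulVec x (star y)`.
  have houter2 : ∀ x y : A → ℂ, krausMap Mf (Matrix.vecMulVec x (star y))
      = krausMap Kf (Matrix.vecMulVec x (star y)) := by
    intro x y
    have hpol : (4 : ℂ) • Matrix.vecMulVec x (star y)
        = Matrix.vecMulVec (x + y) (star (x + y))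
          + Complex.I • Matrix.vecMulVec (x + Complex.I • y) (star (x + Complex.I • y))
          - Matrix.vecMulVec (x - y) (star (x - y))
          - Complex.I • Matrix.vecMulVec (x - Complex.I • y) (star (x - Complex.I • y)) := by
      ext a c
      simp only [Matrix.smul_apply, Matrix.add_apply, Matrix.sub_apply, Matrix.vecMulVec_apply,
        Pi.add_apply, Pi.sub_apply, Pi.smul_apply, Pi.star_apply, smul_eq_mul,
        RCLike.star_def, _root_.map_add, _root_.map_sub, _root_.map_mul, Complex.conj_I]
      linear_combination (2 * (x a * (starRingEnd ℂ) (y c)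
        - y a * (starRingEnd ℂ) (x c))) * Complex.I_sq
    have h4 : (4 : ℂ) • krausMap Mf (Matrix.vecMulVec x (star y))
        = (4 : ℂ) • krausMap Kf (Matrix.vecMulVec x (star y)) := by
      rw [← _root_.map_smul, ← _root_.map_smul, hpol]
      simp only [_root_.map_add, _root_.map_sub, _root_.map_smul]
      rw [houter (x + y), houter (x + Complex.I • y), houter (x - y),
        houter (x - Complex.I • y)]
    exact smul_right_injective _ (by norm_num : (4 : ℂ) ≠ 0) h4
  -- Step 3: equality on standard basis matrices, hence everywhere.
  have hstd2 : ∀ (i j : A) (v : ℂ), Matrix.single i j v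
      = Matrix.vecMulVec (Pi.single i v) (star (Pi.single j (1 : ℂ))) := by
    intro i j v
    ext a c
    by_cases h1 : i = a <;> by_cases h2 : j = c <;>
      simp [Matrix.single, Matrix.vecMulVec_apply, Pi.single_apply, h1, h2, eq_comm]
  rw [Matrix.matrix_eq_sum_single X, _root_.map_sum, _root_.map_sum]
  refine Finset.sum_congr rfl fun i _ => ?_
  rw [_root_.map_sum, _root_.map_sum]
  refine Finset.sum_congr rfl fun j _ => ?_
  rw [hstd2, houter2]

private lemma std_sandwich (P : Matrix A A ℂ) (bq b' a a' : A) :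
    (P * Matrix.single bq b' (1 : ℂ) * Pᴴ) a a'
      = P a bq * (starRingEnd ℂ) (P a' b') := by
  have hPE : ∀ d, (P * Matrix.single bq b' (1 : ℂ)) a d
      = if b' = d then P a bq else 0 := by
    intro d
    rw [Matrix.mul_apply]
    simp [Matrix.single, ite_and, mul_ite, mul_one, mul_zero]
  rw [Matrix.mul_apply]
  simp only [hPE, Matrix.conjTranspose_apply, ite_mul, zero_mul, Finset.sum_ite_eq,
    Finset.mem_univ, if_true, RCLike.star_def]

private lemma contr {ι : Type*} [Fintype ι] (N : ι → Matrix A A ℂ) (V : Matrix A A ℂ) :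
    ∑ q : A × A, ∑ q' : A × A, (starRingEnd ℂ) (V q.1 q.2) * V q'.1 q'.2 *
        (krausMap N (Matrix.single q.2 q'.2 1)) q.1 q'.1
      = ∑ α, (∑ q : A × A, (starRingEnd ℂ) (V q.1 q.2) * N α q.1 q.2) *
          (starRingEnd ℂ) (∑ q : A × A, (starRingEnd ℂ) (V q.1 q.2) * N α q.1 q.2) := by
  have hconj : ∀ α, (starRingEnd ℂ) (∑ q : A × A, (starRingEnd ℂ) (V q.1 q.2) * N α q.1 q.2)
      = ∑ q : A × A, V q.1 q.2 * (starRingEnd ℂ) (N α q.1 q.2) := by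
    intro α
    rw [_root_.map_sum]
    exact Finset.sum_congr rfl fun q _ => by
      rw [_root_.map_mul, Complex.conj_conj]
  calc ∑ q : A × A, ∑ q' : A × A, (starRingEnd ℂ) (V q.1 q.2) * V q'.1 q'.2 *
          (krausMap N (Matrix.single q.2 q'.2 1)) q.1 q'.1
      = ∑ q : A × A, ∑ q' : A × A, ∑ α, (starRingEnd ℂ) (V q.1 q.2) * V q'.1 q'.2 *
          (N α q.1 q.2 * (starRingEnd ℂ) (N α q'.1 q'.2)) := by
        refine Finset.sum_congr rfl fun q _ => Finset.sum_congr rfl fun q' _ => ?_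
        rw [krausMap_apply, Matrix.sum_apply, Finset.mul_sum]
        exact Finset.sum_congr rfl fun α _ => by rw [std_sandwich]
    _ = ∑ α, ∑ q : A × A, ∑ q' : A × A, (starRingEnd ℂ) (V q.1 q.2) * V q'.1 q'.2 *
          (N α q.1 q.2 * (starRingEnd ℂ) (N α q'.1 q'.2)) := by
        have reorder : ∀ (f : (A × A) → (A × A) → ι → ℂ),
            (∑ q, ∑ q', ∑ α, f q q' α) = ∑ α, ∑ q, ∑ q', f q q' α := by
          intro f
          calc (∑ q, ∑ q', ∑ α, f q q' α) = ∑ q, ∑ α, ∑ q', f q q' α :=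
                Finset.sum_congr rfl fun q _ => Finset.sum_comm
            _ = ∑ α, ∑ q, ∑ q', f q q' α := Finset.sum_comm
        exact reorder _
    _ = ∑ α, (∑ q : A × A, (starRingEnd ℂ) (V q.1 q.2) * N α q.1 q.2) *
          (∑ q' : A × A, V q'.1 q'.2 * (starRingEnd ℂ) (N α q'.1 q'.2)) := by
        refine Finset.sum_congr rfl fun α _ => ?_
        rw [Finset.sum_mul_sum]
        exact Finset.sum_congr rfl fun q _ => Finset.sum_congr rfl fun q' _ => by ring
    _ = _ := by
        exact Finset.sum_congr rfl fun α _ => by rw [hconj]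

private lemma inner_vanish {ι κ : Type*} [Fintype ι] [Fintype κ]
    (Mf : ι → Matrix A A ℂ) (Kf : κ → Matrix A A ℂ)
    (hall : ∀ X, krausMap Mf X = krausMap Kf X) (V : Matrix A A ℂ)
    (hV : ∀ i, ∑ q : A × A, (starRingEnd ℂ) (V q.1 q.2) * Mf i q.1 q.2 = 0) :
    ∀ β, ∑ q : A × A, (starRingEnd ℂ) (V q.1 q.2) * Kf β q.1 q.2 = 0 := by
  have h1 : ∑ α, (∑ q : A × A, (starRingEnd ℂ) (V q.1 q.2) * Mf α q.1 q.2) *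
        (starRingEnd ℂ) (∑ q : A × A, (starRingEnd ℂ) (V q.1 q.2) * Mf α q.1 q.2)
      = ∑ β, (∑ q : A × A, (starRingEnd ℂ) (V q.1 q.2) * Kf β q.1 q.2) *
        (starRingEnd ℂ) (∑ q : A × A, (starRingEnd ℂ) (V q.1 q.2) * Kf β q.1 q.2) := by
    rw [← contr Mf V, ← contr Kf V]
    exact Finset.sum_congr rfl fun q _ => Finset.sum_congr rfl fun q' _ => by rw [hall]
  have h2 : ∑ β, (∑ q : A × A, (starRingEnd ℂ) (V q.1 q.2) * Kf β q.1 q.2) *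
      (starRingEnd ℂ) (∑ q : A × A, (starRingEnd ℂ) (V q.1 q.2) * Kf β q.1 q.2) = 0 := by
    rw [← h1]
    exact Finset.sum_eq_zero fun α _ => by rw [hV α, zero_mul]
  have h3 : ∑ β, Complex.normSq (∑ q : A × A, (starRingEnd ℂ) (V q.1 q.2) * Kf β q.1 q.2)
      = 0 := by
    have := h2
    simp only [Complex.mul_conj] at this
    exact_mod_cast this
  intro β
  have h4 := (Finset.sum_eq_zero_iff_of_nonneg
    (fun β _ => Complex.normSq_nonneg _)).mp h3 β (Finset.mem_univ _)
  exact Complex.normSq_eq_zero.mp h4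

private noncomputable def flat : Matrix A A ℂ ≃ₗ[ℂ] EuclideanSpace ℂ (A × A) where
  toFun X := WithLp.toLp 2 (fun q : A × A => X q.1 q.2)
  invFun v := Matrix.of fun a b => v (a, b)
  map_add' _ _ := rfl
  map_smul' _ _ := rfl
  left_inv _ := rfl
  right_inv _ := rfl

private lemma flat_inner (v : EuclideanSpace ℂ (A × A)) (X : Matrix A A ℂ) :
    (inner ℂ v (flat X) : ℂ) = ∑ q : A × A, (starRingEnd ℂ) (v q) * X q.1 q.2 := by
  rw [PiLp.inner_apply]
  exact Finset.sum_congr rfl fun q _ => by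
    rw [RCLike.inner_apply]
    exact mul_comm _ _

private lemma kraus_in_span {ι κ : Type*} [Fintype ι] [Fintype κ]
    (Mf : ι → Matrix A A ℂ) (Kf : κ → Matrix A A ℂ)
    (hall : ∀ X, krausMap Mf X = krausMap Kf X) :
    ∀ β, Kf β ∈ Submodule.span ℂ (Set.range Mf) := by
  intro β
  have hmem : flat (Kf β) ∈ (Submodule.span ℂ (Set.range fun i => flat (Mf i)))ᗮᗮ := by
    rw [Submodule.mem_orthogonal]
    intro v hv
    have hVi : ∀ i, ∑ q : A × A, (starRingEnd ℂ) (v q) * Mf i q.1 q.2 = 0 := by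
      intro i
      have h0 : (inner ℂ (flat (Mf i)) v : ℂ) = 0 :=
        (Submodule.mem_orthogonal _ v).mp hv _ (Submodule.subset_span ⟨i, rfl⟩)
      have h1 : (inner ℂ v (flat (Mf i)) : ℂ) = 0 := by
        rw [← inner_conj_symm, h0, _root_.map_zero]
      rwa [flat_inner] at h1
    have h2 := inner_vanish Mf Kf hall (Matrix.of fun a b => v (a, b)) (fun i => hVi i) β
    rw [flat_inner]
    exact h2
  rw [Submodule.orthogonal_orthogonal] at hmem
  have hrange : (Set.range fun i => flat (Mf i)) = flat '' Set.range Mf := by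
    rw [← Set.range_comp]
    rfl
  rw [hrange, ← LinearEquiv.coe_coe, ← Submodule.map_span] at hmem
  have := Submodule.mem_map.mp hmem
  obtain ⟨y, hy, hxy⟩ := this
  have : y = Kf β := by
    have := congrArg flat.symm hxy
    simpa using this
  rwa [← this]

end AuxHTO

/-- Structure of HTOs in terms of Kraus operators (Theorem 4(a)). -/
theorem hto_kraus_structure
    {A B : Type*} [Fintype A] [DecidableEq A] [Nonempty A]
    [Fintype B] [DecidableEq B] [Nonempty B]
    (H_B : Matrix B B ℂ) (hH : H_B.IsHermitian) {b : ℝ} (hb : 0 < b)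
    (U : Matrix (A × B) (A × B) ℂ) (hU : Uᴴ * U = 1)
    (n : ℕ) (hn : 1 ≤ n)
    (M : Fin n → Matrix A A ℂ) (hlin : LinearIndependent ℂ M)
    (hcomp : ∑ i, (M i)ᴴ * M i = 1)
    (hreal : ∀ ρ : Matrix A A ℂ, IsDensityMatrix ρ →
      ptraceB (U * (ρ ⊗ₖ gibbs H_B b) * Uᴴ) = ∑ i, M i * ρ * (M i)ᴴ) :
    ∃ q : Matrix (Fin n) (Fin n) ℂ, q.IsHermitian ∧
      hto H_B b U = ∑ i, ∑ j, q i j • ((M i)ᴴ * M j) := by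
  classical
  set W : Matrix B B ℂ := (hH.eigenvectorUnitary : Matrix B B ℂ) with hWdef
  have hW : W ∈ Matrix.unitaryGroup B ℂ := hH.eigenvectorUnitary.2
  set ε : B → ℝ := hH.eigenvalues with hεdef
  set p : B → ℝ := fun l => Real.exp (-(b * ε l)) / ∑ m, Real.exp (-(b * ε m)) with hpdef
  have hZ : (0 : ℝ) < ∑ m, Real.exp (-(b * ε m)) :=
    Finset.sum_pos (fun _ _ => Real.exp_pos _) Finset.univ_nonempty
  have hp : ∀ l, 0 ≤ p l := fun l => div_nonneg (Real.exp_pos _).le hZ.le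
  have hgibbs : gibbs H_B b = W * Matrix.diagonal (fun l => (p l : ℂ)) * Wᴴ :=
    gibbs_spectral H_B hH b
  have hHB : H_B = W * Matrix.diagonal (fun l => (ε l : ℂ)) * Wᴴ := by
    conv_lhs => rw [hH.spectral_theorem]
    rfl
  -- the Kraus operators coming from the explicit dilation
  set K : (B × B) → Matrix A A ℂ := krausOp U W p with hKdef
  -- the two Kraus representations agree on density matrices
  have hKM : ∀ ρ, IsDensityMatrix ρ → krausMap M ρ = krausMap K ρ := by
    intro ρ hρ
    rw [krausMap_apply, krausMap_apply, ← hreal ρ hρ, hgibbs, kraus_rep U W hW p hp ρ]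
  have hall := krausMap_eq_on_all M K hKM
  obtain ⟨c, hc⟩ : ∃ c : B × B → Fin n → ℂ, ∀ α, ∑ i, c α i • M i = K α := by
    have hmem := kraus_in_span M K hall
    have hex := fun α => (Submodule.mem_span_range_iff_exists_fun ℂ).mp (hmem α)
    choose c hc using hex
    exact ⟨c, hc⟩
  -- the HTO in terms of the dilation Kraus operators
  have hQ : ptraceB (((1 : Matrix A A ℂ) ⊗ₖ gibbs H_B b) * Uᴴ * ((1 : Matrix A A ℂ) ⊗ₖ H_B) * U)
      = ∑ α : B × B, ((ε α.1 : ℂ)) • ((K α)ᴴ * K α) := by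
    conv_lhs => rw [hgibbs]
    conv_lhs => rw [show (1 : Matrix A A ℂ) ⊗ₖ H_B
        = (1 : Matrix A A ℂ) ⊗ₖ (W * Matrix.diagonal (fun l => (ε l : ℂ)) * Wᴴ) by rw [← hHB]]
    exact hto_rep U W hW p ε hp
  set EB : ℝ := eqEnergy H_B b with hEBdef
  refine ⟨Matrix.of fun i j =>
    (∑ α : B × B, (ε α.1 : ℂ) * ((starRingEnd ℂ) (c α i) * c α j))
      - (if i = j then (EB : ℂ) else 0), ?_, ?_⟩
  · -- Hermitian
    show _ = _
    ext i j
    simp only [Matrix.conjTranspose_apply, Matrix.of_apply, RCLike.star_def, _root_.map_sub,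
      _root_.map_sum, _root_.map_mul, Complex.conj_conj, Complex.conj_ofReal]
    congr 1
    · exact Finset.sum_congr rfl fun α _ => by ring
    · rw [apply_ite (starRingEnd ℂ), _root_.map_zero, Complex.conj_ofReal]
      simp [eq_comm]
  · -- the HTO identity
    have hsmulEB : EB • (1 : Matrix A A ℂ) = (EB : ℂ) • (1 : Matrix A A ℂ) := by
      ext a b'
      simp [Matrix.smul_apply, Complex.real_smul, smul_eq_mul]
    have hKK : ∀ α : B × B, (K α)ᴴ * K α
        = ∑ i, ∑ j, ((starRingEnd ℂ) (c α i) * c α j) • ((M i)ᴴ * M j) := by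
      intro α
      rw [← hc α, Matrix.conjTranspose_sum]
      simp only [Matrix.conjTranspose_smul]
      rw [Finset.sum_mul]
      refine Finset.sum_congr rfl fun i _ => ?_
      rw [Finset.mul_sum]
      refine Finset.sum_congr rfl fun j _ => ?_
      rw [Matrix.smul_mul, Matrix.mul_smul, smul_smul]
      rfl
    rw [hto, hQ, hsmulEB]
    calc (∑ α : B × B, (ε α.1 : ℂ) • ((K α)ᴴ * K α)) - (EB : ℂ) • (1 : Matrix A A ℂ)
        = (∑ α : B × B, ∑ i, ∑ j,
              ((ε α.1 : ℂ) * ((starRingEnd ℂ) (c α i) * c α j)) • ((M i)ᴴ * M j))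
            - ∑ i, ∑ j, (if i = j then (EB : ℂ) else 0) • ((M i)ᴴ * M j) := by
          congr 1
          · refine Finset.sum_congr rfl fun α _ => ?_
            rw [hKK, Finset.smul_sum]
            refine Finset.sum_congr rfl fun i _ => ?_
            rw [Finset.smul_sum]
            exact Finset.sum_congr rfl fun j _ => by rw [smul_smul]
          · rw [← hcomp, Finset.smul_sum]
            refine Finset.sum_congr rfl fun i _ => ?_
            have : ∀ j, (if i = j then (EB : ℂ) else 0) • ((M i)ᴴ * M j)
                = if i = j then (EB : ℂ) • ((M i)ᴴ * M j) else 0 := fun j => by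
              split <;> simp
            simp only [this, Finset.sum_ite_eq, Finset.mem_univ, if_true]
      _ = ∑ i, ∑ j, ((∑ α : B × B, (ε α.1 : ℂ) * ((starRingEnd ℂ) (c α i) * c α j))
              - (if i = j then (EB : ℂ) else 0)) • ((M i)ᴴ * M j) := by
          simp only [sub_smul, Finset.sum_sub_distrib, Finset.sum_smul]
          congr 1
          have reorder : ∀ (f : B × B → Fin n → Fin n → Matrix A A ℂ),
              (∑ α, ∑ i, ∑ j, f α i j) = ∑ i, ∑ j, ∑ α, f α i j := by
            intro f
            calc (∑ α, ∑ i, ∑ j, f α i j) = ∑ i, ∑ α, ∑ j, f α i j := Finset.sum_comm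
              _ = ∑ i, ∑ j, ∑ α, f α i j :=
                  Finset.sum_congr rfl fun i _ => Finset.sum_comm
          exact reorder _
      _ = ∑ i, ∑ j, (Matrix.of fun i j =>
              (∑ α : B × B, (ε α.1 : ℂ) * ((starRingEnd ℂ) (c α i) * c α j))
                - (if i = j then (EB : ℂ) else 0)) i j • ((M i)ᴴ * M j) := by
          exact Finset.sum_congr rfl fun i _ => Finset.sum_congr rfl fun j _ => rfl
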